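/- Let H be a linear s-uniform hypergraph on a vertex set V, let G be a graph on V with an injective map h from the edge set of G to the hyperedges of H such that both endpoints of each edge e of G lie in h(e), and let Γ be a graph on V such that both endpoints of every edge of Γ lie in some common hyperedge of H. Let the edges of Γ be colored with k colors. Suppose Q = v_0 v_1 … v_{ℓ−1} is a good cycle of length ℓ in G such that for every edge v_i v_{i+1} of Q there is a cycle D_i of length 6 in Γ which is an induced subgraph of Γ, all of whose vertices lie in h(v_i v_{i+1}), on which v_i and v_{i+1} are at distance 2, and such that all edges of all the cycles D_i receive the same color. Then for every even integer t with 2ℓ ≤ t ≤ 4ℓ, Γ contains a monochromatic cycle of length t which is an induced subgraph of Γ. -/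

import Mathlib

open SimpleGraph

/-- A path (walk) `P` in `G` is good with respect to the hypergraph `H` and the
assignment `h` of hyperedges to edges. -/
def IsGoodPath {V : Type*} [DecidableEq V] (H : Set (Finset V))
    {G : SimpleGraph V} (h : Sym2 V → Finset V) {u v : V} (P : G.Walk u v) : Prop :=
  (∀ e ∈ P.edges, ∀ e' ∈ P.edges, e ≠ e' →
      ∀ x : V, (x ∈ h e ∧ x ∈ h e') ↔ (x ∈ e ∧ x ∈ e')) ∧
  (∀ f ∈ H, (∀ e ∈ P.edges, f ≠ h e) →
      ∀ x y : V, x ∈ f → y ∈ f →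
        (∃ e ∈ P.edges, x ∈ h e) → (∃ e' ∈ P.edges, y ∈ h e') → x = y)

/-- A cycle `Q` in `G` is good if every pair of its edges is contained in a good
subpath of `Q` (a subpath being an initial segment of a rotation of `Q`). -/
def IsGoodCycle {V : Type*} [DecidableEq V] (H : Set (Finset V))
    {G : SimpleGraph V} (h : Sym2 V → Finset V) {v : V} (Q : G.Walk v v) : Prop :=
  Q.IsCycle ∧
  ∀ e ∈ Q.edges, ∀ e' ∈ Q.edges,
    ∃ (a : V) (ha : a ∈ Q.support) (b : V) (hb : b ∈ (Q.rotate a ha).support),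
      ((Q.rotate a ha).takeUntil b hb).IsPath ∧
      IsGoodPath H h ((Q.rotate a ha).takeUntil b hb) ∧
      e ∈ ((Q.rotate a ha).takeUntil b hb).edges ∧
      e' ∈ ((Q.rotate a ha).takeUntil b hb).edges


section
variable {V : Type} {G : SimpleGraph V}

lemma aux_edges_getVert :
    ∀ {u w : V} (p : G.Walk u w), ∀ e ∈ p.edges,
      ∃ i, i < p.length ∧ e = s(p.getVert i, p.getVert (i + 1)) := by
  intro u w p
  induction p with
  | nil => simp
  | cons hadj q ih =>
    intro e he
    rw [Walk.edges_cons, List.mem_cons] at he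
    rcases he with rfl | he
    · exact ⟨0, by simp [Walk.getVert_zero, Walk.getVert_cons_succ]⟩
    · obtain ⟨i, hi, heq⟩ := ih e he
      exact ⟨i + 1, by simpa using hi, by simpa [Walk.getVert_cons_succ] using heq⟩

lemma aux_getVert_edges :
    ∀ {u w : V} (p : G.Walk u w) (i : ℕ), i < p.length →
      s(p.getVert i, p.getVert (i + 1)) ∈ p.edges := by
  intro u w p
  induction p with
  | nil => simp
  | cons hadj q ih =>
    intro i hi
    rcases i with _ | i
    · simp [Walk.getVert_zero, Walk.getVert_cons_succ]
    · rw [Walk.length_cons, Nat.succ_lt_succ_iff] at hi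
      simpa [Walk.getVert_cons_succ] using Or.inr (ih i hi)

lemma aux_getVert_mem_support {u w : V}
    (p : G.Walk u w) (i : ℕ) : p.getVert i ∈ p.support := by
  rcases le_or_gt i p.length with h | h
  · exact Walk.mem_support_iff_exists_getVert.mpr ⟨i, rfl, h⟩
  · rw [Walk.getVert_of_length_le p h.le]
    exact Walk.end_mem_support p

lemma aux_support_getElem :
    ∀ {u w : V} (p : G.Walk u w) (i : ℕ) (hi : i ≤ p.length),
      p.support[i]'(by rw [Walk.length_support]; omega) = p.getVert i := by
  intro u w p
  induction p with
  | nil =>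
    intro i hi
    have : i = 0 := by simpa using hi
    subst this
    simp [Walk.getVert_zero]
  | cons hadj q ih =>
    intro i hi
    rcases i with _ | i
    · simp [Walk.getVert_zero]
    · rw [Walk.length_cons] at hi
      rw [Walk.getVert_cons_succ]
      simpa [Walk.support_cons] using ih i (by omega)

lemma aux_getVert_inj {u : V} {p : G.Walk u u}
    (hnd : p.support.tail.Nodup) {i j : ℕ} (h1 : 1 ≤ i) (h2 : i ≤ p.length)
    (h3 : 1 ≤ j) (h4 : j ≤ p.length) (hij : p.getVert i = p.getVert j) : i = j := by
  have hs := p.support_eq_cons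
  have hlen : p.support.tail.length = p.length := by
    have := p.length_support
    rw [hs] at this ⊢
    simpa using by omega
  have key : ∀ m : ℕ, 1 ≤ m → (hm : m ≤ p.length) →
      p.support.tail[m-1]'(by omega) = p.getVert m := by
    intro m hm1 hm2
    have h := aux_support_getElem p m hm2
    rw [List.getElem_of_eq hs (by rw [Walk.length_support]; omega)] at h
    rw [List.getElem_cons] at h
    rw [dif_neg (by omega)] at h
    exact h
  have e1 := key i h1 h2
  have e2 := key j h3 h4
  have := (hnd.getElem_inj_iff).mp (e1.trans (hij.trans e2.symm))
  omega

end

section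
variable {V : Type} [DecidableEq V] {k : ℕ}

lemma aux_arc (Γ : SimpleGraph V) (h : Sym2 V → Finset V) (c : Sym2 V → Fin k) (κ : Fin k)
    {x y : V} (D : Γ.Walk x x) (hcyc : D.IsCycle) (hlen : D.length = 6)
    (hgv : D.getVert 2 = y)
    (hsup : ∀ z ∈ D.support, z ∈ h s(x, y))
    (hind : ∀ a ∈ D.support, ∀ b ∈ D.support, Γ.Adj a b → s(a, b) ∈ D.edges)
    (hcol : ∀ p ∈ D.edges, c p = κ) :
    (¬ Γ.Adj x y) ∧ ∀ b : Bool, ∃ A : Γ.Walk x y, A.IsPath ∧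
      A.length = (if b then 4 else 2) ∧
      (∀ z ∈ A.support, z ∈ h s(x, y)) ∧
      (∀ a₁ ∈ A.support, ∀ a₂ ∈ A.support, Γ.Adj a₁ a₂ → s(a₁, a₂) ∈ A.edges) ∧
      (∀ p ∈ A.edges, c p = κ) := by
  have hnd : D.support.tail.Nodup := ((Walk.isCycle_def D).mp hcyc).2.2
  have hx0 : D.getVert 0 = x := Walk.getVert_zero D
  have hx6 : D.getVert 6 = x := by rw [← hlen]; exact Walk.getVert_length D
  have hne : ∀ i j : ℕ, 1 ≤ i → i ≤ 6 → 1 ≤ j → j ≤ 6 → i ≠ j →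
      D.getVert i ≠ D.getVert j := by
    intro i j h1 h2 h3 h4 hij hEq
    exact hij (aux_getVert_inj hnd h1 (le_of_le_of_eq h2 hlen.symm) h3
      (le_of_le_of_eq h4 hlen.symm) hEq)
  have adj : ∀ i : ℕ, i < 6 → Γ.Adj (D.getVert i) (D.getVert (i + 1)) := by
    intro i hi
    exact D.adj_getVert_succ (by rw [hlen]; exact hi)
  have hmemD : ∀ i : ℕ, D.getVert i ∈ D.support := fun i => aux_getVert_mem_support D i
  have hyD : y ∈ D.support := hgv ▸ hmemD 2
  have hnochord : ¬ Γ.Adj x y := by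
    intro hA
    obtain ⟨i, hi, heq⟩ := aux_edges_getVert D _ (hind x (Walk.start_mem_support D) y hyD hA)
    rw [hlen] at hi
    rw [Sym2.eq_iff] at heq
    rcases heq with ⟨h1, h2⟩ | ⟨h1, h2⟩
    · -- x = d i, y = d (i+1)
      have hi1 : i + 1 = 2 := by
        refine aux_getVert_inj hnd (by omega) (by omega) (by omega) (by omega) ?_
        rw [← h2, hgv]
      have : i = 1 := by omega
      subst this
      exact hne 6 1 (by omega) (by omega) (by omega) (by omega) (by omega) (hx6.trans h1)
    · -- x = d (i+1), y = d i
      rcases Nat.eq_zero_or_pos i with rfl | hipos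
      · rw [hx0] at h2; exact hA.ne' h2
      · have hi2 : i = 2 := by
          refine aux_getVert_inj hnd (by omega) (by omega) (by omega) (by omega) ?_
          rw [← h2, hgv]
        subst hi2
        exact hne 6 3 (by omega) (by omega) (by omega) (by omega) (by omega) (hx6.trans h1)
  refine ⟨hnochord, ?_⟩
  have a01 : Γ.Adj x (D.getVert 1) := by
    have := adj 0 (by omega); norm_num at this; exact this
  have a12 : Γ.Adj (D.getVert 1) y := by
    have := adj 1 (by omega); norm_num at this; rwa [hgv] at this
  have a32 : Γ.Adj (D.getVert 3) y := by
    have := (adj 2 (by omega)).symm; norm_num at this; rwa [hgv] at this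
  have a43 : Γ.Adj (D.getVert 4) (D.getVert 3) := by
    have := (adj 3 (by omega)).symm; norm_num at this; exact this
  have a54 : Γ.Adj (D.getVert 5) (D.getVert 4) := by
    have := (adj 4 (by omega)).symm; norm_num at this; exact this
  have a05 : Γ.Adj x (D.getVert 5) := by
    have := (adj 5 (by omega)).symm; norm_num at this; rwa [hx6] at this
  have hxne : ∀ j : ℕ, 1 ≤ j → j ≤ 5 → x ≠ D.getVert j := by
    intro j h1 h2 hEq
    exact hne 6 j (by omega) (by omega) (by omega) (by omega) (by omega) (hx6.trans hEq)
  have hyne : ∀ j : ℕ, 1 ≤ j → j ≤ 6 → j ≠ 2 → y ≠ D.getVert j := by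
    intro j h1 h2 h3 hEq
    exact hne 2 j (by omega) (by omega) (by omega) (by omega) (by omega) (hgv.trans hEq)
  intro b
  cases b
  · -- short arc x - d1 - y
    refine ⟨Walk.cons a01 (Walk.cons a12 Walk.nil), ?_, ?_, ?_, ?_, ?_⟩
    · rw [Walk.isPath_def]
      simp only [Walk.support_cons, Walk.support_nil]
      refine List.nodup_cons.mpr ⟨?_, List.nodup_cons.mpr ⟨?_, List.nodup_singleton _⟩⟩
      · intro hm
        simp only [List.mem_cons, List.mem_singleton, List.not_mem_nil, or_false] at hm
        rcases hm with hEq | hEq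
        · exact hxne 1 (by omega) (by omega) hEq
        · exact hxne 2 (by omega) (by omega) (hEq.trans hgv.symm)
      · intro hm
        simp only [List.mem_singleton, List.mem_cons, List.not_mem_nil, or_false] at hm
        exact hyne 1 (by omega) (by omega) (by omega) hm.symm
    · simp
    · intro z hz
      simp only [Walk.support_cons, Walk.support_nil, List.mem_cons, List.mem_singleton,
        List.not_mem_nil, or_false] at hz
      rcases hz with rfl | rfl | rfl
      · exact hsup z (Walk.start_mem_support D)
      · exact hsup _ (hmemD 1)
      · exact hsup _ hyD
    · intro a₁ ha₁ a₂ ha₂ hadj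
      have hmem : ∀ a, a ∈ (Walk.cons a01 (Walk.cons a12 Walk.nil)).support →
          a ∈ D.support := by
        intro a ha
        simp only [Walk.support_cons, Walk.support_nil, List.mem_cons, List.mem_singleton,
          List.not_mem_nil, or_false] at ha
        rcases ha with rfl | rfl | rfl
        exacts [Walk.start_mem_support D, hmemD 1, hyD]
      have hbad : ∀ a, a ∈ (Walk.cons a01 (Walk.cons a12 Walk.nil)).support →
          ∀ j : ℕ, 3 ≤ j → j ≤ 5 → a ≠ D.getVert j := by
        intro a ha j hj1 hj2
        simp only [Walk.support_cons, Walk.support_nil, List.mem_cons, List.mem_singleton,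
          List.not_mem_nil, or_false] at ha
        rcases ha with rfl | rfl | rfl
        · exact hxne j (by omega) (by omega)
        · intro hEq; exact hne 1 j (by omega) (by omega) (by omega) (by omega) (by omega) hEq
        · exact hyne j (by omega) (by omega) (by omega)
      obtain ⟨i, hi, heq⟩ := aux_edges_getVert D _ (hind a₁ (hmem a₁ ha₁) a₂ (hmem a₂ ha₂) hadj)
      rw [hlen] at hi
      interval_cases i
      · rw [heq, hx0]; simp
      · rw [heq, hgv]; simp
      · rw [Sym2.eq_iff] at heq
        rcases heq with ⟨h1, h2⟩ | ⟨h1, h2⟩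
        · exact absurd h2 (hbad a₂ ha₂ 3 (by omega) (by omega))
        · exact absurd h1 (hbad a₁ ha₁ 3 (by omega) (by omega))
      · rw [Sym2.eq_iff] at heq
        rcases heq with ⟨h1, h2⟩ | ⟨h1, h2⟩
        · exact absurd h1 (hbad a₁ ha₁ 3 (by omega) (by omega))
        · exact absurd h2 (hbad a₂ ha₂ 3 (by omega) (by omega))
      · rw [Sym2.eq_iff] at heq
        rcases heq with ⟨h1, h2⟩ | ⟨h1, h2⟩
        · exact absurd h2 (hbad a₂ ha₂ 5 (by omega) (by omega))
        · exact absurd h1 (hbad a₁ ha₁ 5 (by omega) (by omega))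
      · rw [Sym2.eq_iff] at heq
        rcases heq with ⟨h1, h2⟩ | ⟨h1, h2⟩
        · exact absurd h1 (hbad a₁ ha₁ 5 (by omega) (by omega))
        · exact absurd h2 (hbad a₂ ha₂ 5 (by omega) (by omega))
    · intro p hp
      simp only [Walk.edges_cons, Walk.edges_nil, List.mem_cons, List.not_mem_nil,
        or_false] at hp
      have he0 : s(x, D.getVert 1) ∈ D.edges := by
        have := aux_getVert_edges D 0 (by omega)
        rwa [hx0] at this
      have he1 : s(D.getVert 1, y) ∈ D.edges := by
        have := aux_getVert_edges D 1 (by omega)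
        rwa [show D.getVert (1+1) = y from hgv] at this
      rcases hp with rfl | rfl
      exacts [hcol _ he0, hcol _ he1]
  · -- long arc x - d5 - d4 - d3 - y
    refine ⟨Walk.cons a05 (Walk.cons a54 (Walk.cons a43 (Walk.cons a32 Walk.nil))), ?_, ?_, ?_, ?_, ?_⟩
    · rw [Walk.isPath_def]
      simp only [Walk.support_cons, Walk.support_nil]
      refine List.nodup_cons.mpr ⟨?_, List.nodup_cons.mpr ⟨?_, List.nodup_cons.mpr ⟨?_,
        List.nodup_cons.mpr ⟨?_, List.nodup_singleton _⟩⟩⟩⟩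
      · intro hm
        simp only [List.mem_cons, List.mem_singleton, List.not_mem_nil, or_false] at hm
        rcases hm with hEq | hEq | hEq | hEq
        · exact hxne 5 (by omega) (by omega) hEq
        · exact hxne 4 (by omega) (by omega) hEq
        · exact hxne 3 (by omega) (by omega) hEq
        · exact hxne 2 (by omega) (by omega) (hEq.trans hgv.symm)
      · intro hm
        simp only [List.mem_cons, List.mem_singleton, List.not_mem_nil, or_false] at hm
        rcases hm with hEq | hEq | hEq
        · exact hne 5 4 (by omega) (by omega) (by omega) (by omega) (by omega) hEq
        · exact hne 5 3 (by omega) (by omega) (by omega) (by omega) (by omega) hEq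
        · exact hyne 5 (by omega) (by omega) (by omega) hEq.symm
      · intro hm
        simp only [List.mem_cons, List.mem_singleton, List.not_mem_nil, or_false] at hm
        rcases hm with hEq | hEq
        · exact hne 4 3 (by omega) (by omega) (by omega) (by omega) (by omega) hEq
        · exact hyne 4 (by omega) (by omega) (by omega) hEq.symm
      · intro hm
        simp only [List.mem_cons, List.mem_singleton, List.not_mem_nil, or_false] at hm
        exact hyne 3 (by omega) (by omega) (by omega) hm.symm
    · simp
    · intro z hz
      simp only [Walk.support_cons, Walk.support_nil, List.mem_cons, List.mem_singleton,
        List.not_mem_nil, or_false] at hz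
      rcases hz with rfl | rfl | rfl | rfl | rfl
      exacts [hsup z (Walk.start_mem_support D), hsup _ (hmemD 5), hsup _ (hmemD 4),
        hsup _ (hmemD 3), hsup _ hyD]
    · intro a₁ ha₁ a₂ ha₂ hadj
      have hmem : ∀ a, a ∈ (Walk.cons a05 (Walk.cons a54 (Walk.cons a43 (Walk.cons a32 Walk.nil)))).support →
          a ∈ D.support := by
        intro a ha
        simp only [Walk.support_cons, Walk.support_nil, List.mem_cons, List.mem_singleton,
          List.not_mem_nil, or_false] at ha
        rcases ha with rfl | rfl | rfl | rfl | rfl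
        exacts [Walk.start_mem_support D, hmemD 5, hmemD 4, hmemD 3, hyD]
      have hbad : ∀ a, a ∈ (Walk.cons a05 (Walk.cons a54 (Walk.cons a43 (Walk.cons a32 Walk.nil)))).support →
          a ≠ D.getVert 1 := by
        intro a ha
        simp only [Walk.support_cons, Walk.support_nil, List.mem_cons, List.mem_singleton,
          List.not_mem_nil, or_false] at ha
        rcases ha with rfl | rfl | rfl | rfl | rfl
        · exact hxne 1 (by omega) (by omega)
        · exact hne 5 1 (by omega) (by omega) (by omega) (by omega) (by omega)
        · exact hne 4 1 (by omega) (by omega) (by omega) (by omega) (by omega)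
        · exact hne 3 1 (by omega) (by omega) (by omega) (by omega) (by omega)
        · exact hyne 1 (by omega) (by omega) (by omega)
      obtain ⟨i, hi, heq⟩ := aux_edges_getVert D _ (hind a₁ (hmem a₁ ha₁) a₂ (hmem a₂ ha₂) hadj)
      rw [hlen] at hi
      interval_cases i
      · rw [Sym2.eq_iff] at heq
        rcases heq with ⟨h1, h2⟩ | ⟨h1, h2⟩
        · exact absurd h2 (hbad a₂ ha₂)
        · exact absurd h1 (hbad a₁ ha₁)
      · rw [Sym2.eq_iff] at heq
        rcases heq with ⟨h1, h2⟩ | ⟨h1, h2⟩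
        · exact absurd h1 (hbad a₁ ha₁)
        · exact absurd h2 (hbad a₂ ha₂)
      · rw [heq, hgv, Sym2.eq_swap]; simp
      · rw [heq, Sym2.eq_swap]; simp
      · rw [heq, Sym2.eq_swap]; simp
      · rw [heq, show D.getVert (5+1) = x from hx6, Sym2.eq_swap]; simp
    · intro p hp
      simp only [Walk.edges_cons, Walk.edges_nil, List.mem_cons, List.not_mem_nil,
        or_false] at hp
      have he5 : s(x, D.getVert 5) ∈ D.edges := by
        have := aux_getVert_edges D 5 (by omega)
        rw [show D.getVert (5+1) = x from hx6] at this
        rwa [Sym2.eq_swap] at this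
      have he4 : s(D.getVert 5, D.getVert 4) ∈ D.edges := by
        have := aux_getVert_edges D 4 (by omega)
        rwa [Sym2.eq_swap] at this
      have he3 : s(D.getVert 4, D.getVert 3) ∈ D.edges := by
        have := aux_getVert_edges D 3 (by omega)
        rwa [Sym2.eq_swap] at this
      have he2 : s(D.getVert 3, y) ∈ D.edges := by
        have := aux_getVert_edges D 2 (by omega)
        rw [show D.getVert (2+1) = D.getVert 3 from rfl, hgv] at this
        rwa [Sym2.eq_swap] at this
      rcases hp with rfl | rfl | rfl | rfl
      exacts [hcol _ he5, hcol _ he4, hcol _ he3, hcol _ he2]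

end


def ArcGood {V : Type} {k : ℕ} (Γ : SimpleGraph V) (h : Sym2 V → Finset V)
    (c : Sym2 V → Fin k) (κ : Fin k) {x y : V} (A : Γ.Walk x y) : Prop :=
  A.IsPath ∧ (∀ z ∈ A.support, z ∈ h s(x, y)) ∧
  (∀ a₁ ∈ A.support, ∀ a₂ ∈ A.support, Γ.Adj a₁ a₂ → s(a₁, a₂) ∈ A.edges) ∧
  (∀ p ∈ A.edges, c p = κ)

lemma aux_build {V : Type} {k : ℕ} (G Γ : SimpleGraph V)
    (h : Sym2 V → Finset V) (c : Sym2 V → Fin k) (κ : Fin k) (QE : List (Sym2 V))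
    (coneq : ∀ e ∈ QE, ∀ e' ∈ QE, e ≠ e' → ∀ z : V, z ∈ h e → z ∈ h e' → z ∈ e ∧ z ∈ e')
    (arcEx : ∀ x y : V, s(x, y) ∈ QE → ∀ b : Bool, ∃ A : Γ.Walk x y,
      ArcGood Γ h c κ A ∧ A.length = (if b then 4 else 2)) :
    ∀ {u' w' : V} (q : G.Walk u' w') (m' : ℕ), m' ≤ q.length → q.support.Nodup →
      (∀ e ∈ q.edges, e ∈ QE) →
      ∃ W' : Γ.Walk u' w',
        W'.length = 2 * q.length + 2 * m' ∧
        (∀ p ∈ W'.edges, c p = κ) ∧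
        W'.support.tail.Nodup ∧
        W'.edges.Nodup ∧
        (∀ z ∈ W'.support.tail, ∃ (x' y' : V) (A' : Γ.Walk x' y'),
          s(x', y') ∈ q.edges ∧ ArcGood Γ h c κ A' ∧ z ∈ A'.support.tail ∧
          y' ∈ q.support.tail ∧ (∀ p ∈ A'.edges, p ∈ W'.edges) ∧
          (∀ z' ∈ W'.support, z' ∈ h s(x', y') → z' ∈ A'.support)) ∧
        (∀ p ∈ W'.edges, ∃ f ∈ q.edges, ∀ z ∈ p, z ∈ h f) := by
  intro u' w' q
  induction q with
  | nil =>
    intro m' hm' _ _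
    have : m' = 0 := by simpa using hm'
    subst this
    exact ⟨Walk.nil, by simp, by simp, by simp, by simp, by simp, by simp⟩
  | @cons u₀ b₀ w₀ hadj q₂ ih =>
    intro m' hm' hnd hsub
    rw [Walk.length_cons] at hm'
    have hndsup : (Walk.cons hadj q₂).support = u₀ :: q₂.support := Walk.support_cons _ _
    rw [hndsup, List.nodup_cons] at hnd
    have hedges : (Walk.cons hadj q₂).edges = s(u₀, b₀) :: q₂.edges := Walk.edges_cons _ _
    have hecur : s(u₀, b₀) ∈ QE := hsub _ (by rw [hedges]; exact List.mem_cons_self)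
    have hsub₂ : ∀ e ∈ q₂.edges, e ∈ QE := fun e he =>
      hsub e (by rw [hedges]; exact List.mem_cons_of_mem _ he)
    have hq₂path : q₂.IsPath := (Walk.isPath_def q₂).mpr hnd.2
    have hqpath : (Walk.cons hadj q₂).IsPath := by
      rw [Walk.isPath_def, hndsup]; exact List.nodup_cons.mpr hnd
    have hcurnot : s(u₀, b₀) ∉ q₂.edges := by
      have := hqpath.edges_nodup
      rw [hedges] at this
      exact (List.nodup_cons.mp this).1
    have hq₂b : b₀ ∉ q₂.support.tail := by
      have := hnd.2
      rw [q₂.support_eq_cons] at this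
      exact (List.nodup_cons.mp this).1
    obtain ⟨bl, m₂, hm₂le, hmsum⟩ : ∃ (bl : Bool) (m₂ : ℕ), m₂ ≤ q₂.length ∧
        (if bl then (4:ℕ) else 2) + (2 * q₂.length + 2 * m₂) =
          2 * (Walk.cons hadj q₂).length + 2 * m' := by
      rcases le_or_gt m' q₂.length with hc | hc
      · exact ⟨false, m', hc, by simp [Walk.length_cons]; omega⟩
      · exact ⟨true, m' - 1, by omega, by simp [Walk.length_cons]; omega⟩
    obtain ⟨A, hAgood, hAlen⟩ := arcEx u₀ b₀ hecur bl
    obtain ⟨W₂, hlen₂, hcol₂, hnd₂, hednd₂, hinv₂, hinv₆₂⟩ := ih m₂ hm₂le hnd.2 hsub₂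
    obtain ⟨hApath, hAsup, hAind, hAcol⟩ := hAgood
    have hAnd : A.support.tail.Nodup := by
      have := (Walk.isPath_def A).mp hApath
      rw [A.support_eq_cons] at this
      exact (List.nodup_cons.mp this).2
    have hAstart : u₀ ∉ A.support.tail := by
      have := (Walk.isPath_def A).mp hApath
      rw [A.support_eq_cons] at this
      exact (List.nodup_cons.mp this).1
    have hAgood' : ArcGood Γ h c κ A := ⟨hApath, hAsup, hAind, hAcol⟩
    have hdisj : ∀ z ∈ A.support.tail, z ∈ W₂.support.tail → False := by
      intro z hzA hzW
      obtain ⟨x₂, y₂, A₂, he₂, hA₂good, hzA₂, hy₂, -, -⟩ := hinv₂ z hzW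
      have hne₂ : s(u₀, b₀) ≠ s(x₂, y₂) := fun hEq => hcurnot (hEq ▸ he₂)
      have hz1 : z ∈ h s(u₀, b₀) := hAsup z (List.mem_of_mem_tail hzA)
      have hz2 : z ∈ h s(x₂, y₂) := hA₂good.2.1 z (List.mem_of_mem_tail hzA₂)
      obtain ⟨hze, hze₂⟩ := coneq _ hecur _ (hsub₂ _ he₂) hne₂ z hz1 hz2
      rw [Sym2.mem_iff] at hze hze₂
      rcases hze with rfl | rfl
      · exact hAstart hzA
      · rcases hze₂ with hEq | hEq
        · have hx₂start : x₂ ∉ A₂.support.tail := by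
            have := (Walk.isPath_def A₂).mp hA₂good.1
            rw [A₂.support_eq_cons] at this
            exact (List.nodup_cons.mp this).1
          exact hx₂start (hEq ▸ hzA₂)
        · exact hq₂b (hEq ▸ hy₂)
    refine ⟨A.append W₂, ?_, ?_, ?_, ?_, ?_, ?_⟩
    · rw [Walk.length_append, hAlen, hlen₂]
      exact hmsum
    · intro p hp
      rw [Walk.edges_append, List.mem_append] at hp
      rcases hp with hp | hp
      exacts [hAcol p hp, hcol₂ p hp]
    · rw [Walk.tail_support_append]
      exact List.nodup_append'.mpr ⟨hAnd, hnd₂, fun z hz hz' => hdisj z hz hz'⟩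
    · rw [Walk.edges_append]
      refine List.nodup_append'.mpr ⟨hApath.edges_nodup, hednd₂, ?_⟩
      intro p hpA hpW
      obtain ⟨f, hf, hpf⟩ := hinv₆₂ p hpW
      have hnef : s(u₀, b₀) ≠ f := fun hEq => hcurnot (hEq ▸ hf)
      induction p using Sym2.ind with
      | _ α β =>
        have hαβ : Γ.Adj α β := (SimpleGraph.mem_edgeSet Γ).mp (A.edges_subset_edgeSet hpA)
        have hαA : α ∈ A.support := A.fst_mem_support_of_mem_edges hpA
        have hβA : β ∈ A.support := A.snd_mem_support_of_mem_edges hpA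
        have hα := coneq _ hecur _ (hsub₂ _ hf) hnef α (hAsup α hαA)
          (hpf α (Sym2.mem_mk_left α β))
        have hβ := coneq _ hecur _ (hsub₂ _ hf) hnef β (hAsup β hβA)
          (hpf β (Sym2.mem_mk_right α β))
        have h1 : s(u₀, b₀) = s(α, β) := (Sym2.mem_and_mem_iff hαβ.ne).mp ⟨hα.1, hβ.1⟩
        have h2 : f = s(α, β) := (Sym2.mem_and_mem_iff hαβ.ne).mp ⟨hα.2, hβ.2⟩
        exact hnef (h1.trans h2.symm)
    · intro z hz
      rw [Walk.tail_support_append, List.mem_append] at hz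
      rcases hz with hzA | hzW
      · refine ⟨u₀, b₀, A, by rw [hedges]; exact List.mem_cons_self, hAgood', hzA,
          ?_, ?_, ?_⟩
        · rw [hndsup]
          exact q₂.start_mem_support
        · intro p hp
          rw [Walk.edges_append, List.mem_append]
          exact Or.inl hp
        · intro z' hz' hzh
          rw [Walk.mem_support_append_iff] at hz'
          rcases hz' with hz'A | hz'W
          · exact hz'A
          · rcases eq_or_ne z' b₀ with rfl | hzb
            · exact A.end_mem_support
            · have hz'Wt : z' ∈ W₂.support.tail := by
                rw [W₂.support_eq_cons] at hz'W
                rcases List.mem_cons.mp hz'W with hEq | hmem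
                · exact absurd hEq hzb
                · exact hmem
              obtain ⟨x₃, y₃, A₃, he₃, hA₃good, hzA₃, -, -, -⟩ := hinv₂ z' hz'Wt
              have hne₃ : s(u₀, b₀) ≠ s(x₃, y₃) := fun hEq => hcurnot (hEq ▸ he₃)
              have := (coneq _ hecur _ (hsub₂ _ he₃) hne₃ z' hzh
                (hA₃good.2.1 z' (List.mem_of_mem_tail hzA₃))).1
              rw [Sym2.mem_iff] at this
              rcases this with rfl | rfl
              · exact A.start_mem_support
              · exact A.end_mem_support
      · obtain ⟨x₂, y₂, A₂, he₂, hA₂good, hzA₂, hy₂, hedges₂, hsat₂⟩ := hinv₂ z hzW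
        refine ⟨x₂, y₂, A₂, by rw [hedges]; exact List.mem_cons_of_mem _ he₂, hA₂good,
          hzA₂, ?_, ?_, ?_⟩
        · rw [hndsup]
          exact List.mem_of_mem_tail hy₂
        · intro p hp
          rw [Walk.edges_append, List.mem_append]
          exact Or.inr (hedges₂ p hp)
        · intro z' hz' hzh
          rw [Walk.mem_support_append_iff] at hz'
          rcases hz' with hz'A | hz'W
          · have hne₂ : s(u₀, b₀) ≠ s(x₂, y₂) := fun hEq => hcurnot (hEq ▸ he₂)
            have := (coneq _ hecur _ (hsub₂ _ he₂) hne₂ z' (hAsup z' hz'A) hzh).2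
            rw [Sym2.mem_iff] at this
            rcases this with rfl | rfl
            · exact A₂.start_mem_support
            · exact A₂.end_mem_support
          · exact hsat₂ z' hz'W hzh
    · intro p hp
      rw [Walk.edges_append, List.mem_append] at hp
      rcases hp with hp | hp
      · refine ⟨s(u₀, b₀), by rw [hedges]; exact List.mem_cons_self, ?_⟩
        induction p using Sym2.ind with
        | _ α β =>
          intro z hzp
          rw [Sym2.mem_iff] at hzp
          rcases hzp with rfl | rfl
          · exact hAsup z (A.fst_mem_support_of_mem_edges hp)
          · exact hAsup z (A.snd_mem_support_of_mem_edges hp)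
      · obtain ⟨f, hf, hpf⟩ := hinv₆₂ p hp
        exact ⟨f, by rw [hedges]; exact List.mem_cons_of_mem _ hf, hpf⟩

/-- Lemma 5.6 part 1) of the paper: given a good cycle of length `ℓ` in the auxiliary
graph `G`, each of whose edges comes from a monochromatic induced `6`-cycle (of one
common color) inside its assigned hyperedge with the two endpoints at distance `2`
on that `6`-cycle, the host graph `Γ` contains a monochromatic induced cycle of
length `t` for every even `t` with `2ℓ ≤ t ≤ 4ℓ`. -/
theorem good_cycle_to_induced_cycle_even {V : Type} [DecidableEq V] (s k : ℕ)
    (H : Set (Finset V))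
    (huniform : ∀ e ∈ H, e.card = s)
    (hlinear : ∀ e ∈ H, ∀ f ∈ H, e ≠ f → (e ∩ f).card ≤ 1)
    (G : SimpleGraph V) (h : Sym2 V → Finset V)
    (hmem : ∀ e ∈ G.edgeSet, h e ∈ H ∧ ∀ x ∈ e, x ∈ h e)
    (hinj : Set.InjOn h G.edgeSet)
    (Γ : SimpleGraph V)
    (hΓ : ∀ x y : V, Γ.Adj x y → ∃ f ∈ H, x ∈ f ∧ y ∈ f)
    (c : Sym2 V → Fin k)
    (v : V) (Q : G.Walk v v) (ℓ : ℕ) (hℓ : Q.length = ℓ)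
    (hQ : IsGoodCycle H h Q)
    (κ : Fin k)
    (hD : ∀ x y : V, s(x, y) ∈ Q.edges →
      ∃ D : Γ.Walk x x, D.IsCycle ∧ D.length = 6 ∧ D.getVert 2 = y ∧
        (∀ z ∈ D.support, z ∈ h s(x, y)) ∧
        (∀ a ∈ D.support, ∀ b ∈ D.support, Γ.Adj a b → s(a, b) ∈ D.edges) ∧
        (∀ p ∈ D.edges, c p = κ))
    (t : ℕ) (hte : Even t) (ht1 : 2 * ℓ ≤ t) (ht2 : t ≤ 4 * ℓ) :
    ∃ (a : V) (W : Γ.Walk a a), W.IsCycle ∧ W.length = t ∧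
      (∀ p ∈ W.edges, ∀ q ∈ W.edges, c p = c q) ∧
      (∀ x ∈ W.support, ∀ y ∈ W.support, Γ.Adj x y → s(x, y) ∈ W.edges) := by
  have hl3 : 3 ≤ ℓ := hℓ ▸ hQ.1.three_le_length
  obtain ⟨m, hmle, hmt⟩ : ∃ m, m ≤ ℓ ∧ t = 2 * ℓ + 2 * m := by
    obtain ⟨r, hr⟩ := hte
    exact ⟨r - ℓ, by omega, by omega⟩
  have coneq : ∀ e ∈ Q.edges, ∀ e' ∈ Q.edges, e ≠ e' → ∀ z : V,
      z ∈ h e → z ∈ h e' → z ∈ e ∧ z ∈ e' := by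
    intro e he e' he' hne z hz1 hz2
    obtain ⟨a, ha, b, hb, hpath, hgood, heP, heP'⟩ := hQ.2 e he e' he'
    exact (hgood.1 e heP e' heP' hne z).mp ⟨hz1, hz2⟩
  have harc : ∀ x y : V, s(x, y) ∈ Q.edges → (¬ Γ.Adj x y) ∧ ∀ b : Bool,
      ∃ A : Γ.Walk x y, A.IsPath ∧ A.length = (if b then 4 else 2) ∧
      (∀ z ∈ A.support, z ∈ h s(x, y)) ∧
      (∀ a₁ ∈ A.support, ∀ a₂ ∈ A.support, Γ.Adj a₁ a₂ → s(a₁, a₂) ∈ A.edges) ∧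
      (∀ p ∈ A.edges, c p = κ) := by
    intro x y hxy
    obtain ⟨D, hc, hl, hg, hs, hi, hco⟩ := hD x y hxy
    exact aux_arc Γ h c κ D hc hl hg hs hi hco
  have nochord : ∀ x y : V, s(x, y) ∈ Q.edges → ¬ Γ.Adj x y :=
    fun x y hxy => (harc x y hxy).1
  have arcEx : ∀ x y : V, s(x, y) ∈ Q.edges → ∀ b : Bool, ∃ A : Γ.Walk x y,
      ArcGood Γ h c κ A ∧ A.length = (if b then 4 else 2) := by
    intro x y hxy b
    obtain ⟨A, h1, h2, h3, h4, h5⟩ := (harc x y hxy).2 b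
    exact ⟨A, ⟨h1, h3, h4, h5⟩, h2⟩
  have master : ∀ e ∈ Q.edges, ∀ e' ∈ Q.edges, e ≠ e' → ∀ x y : V, x ∈ h e → y ∈ h e' →
      Γ.Adj x y → (x ∈ e ∧ x ∈ e') ∨ (y ∈ e ∧ y ∈ e') := by
    intro e he e' he' hne x y hx hy hadj
    obtain ⟨f, hfH, hxf, hyf⟩ := hΓ x y hadj
    obtain ⟨a, ha, b, hb, hpath, hgood, heP, heP'⟩ := hQ.2 e he e' he'
    have hPsub : ∀ em ∈ ((Q.rotate a ha).takeUntil b hb).edges, em ∈ Q.edges := fun em hm =>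
      (Q.rotate_edges a ha).mem_iff.mp (Walk.edges_takeUntil_subset _ _ hm)
    by_cases hcase : ∀ em ∈ ((Q.rotate a ha).takeUntil b hb).edges, f ≠ h em
    · exact absurd (hgood.2 f hfH hcase x y hxf hyf ⟨e, heP, hx⟩ ⟨e', heP', hy⟩) hadj.ne
    · push_neg at hcase
      obtain ⟨em, hem, hfem⟩ := hcase
      have hemQ : em ∈ Q.edges := hPsub em hem
      rcases eq_or_ne em e with rfl | hne1
      · exact Or.inr (coneq _ he _ he' hne y (hfem ▸ hyf) hy)
      · rcases eq_or_ne em e' with rfl | hne2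
        · exact Or.inl (coneq _ he _ he' hne x hx (hfem ▸ hxf))
        · exfalso
          have hxm := (coneq _ hemQ _ he hne1 x (hfem ▸ hxf) hx).1
          have hym := (coneq _ hemQ _ he' hne2 y (hfem ▸ hyf) hy).1
          have hemxy : em = s(x, y) := (Sym2.mem_and_mem_iff hadj.ne).mp ⟨hxm, hym⟩
          exact nochord x y (hemxy ▸ hemQ) hadj
  have hQtrail : Q.edges.Nodup := ((Walk.isCycle_def Q).mp hQ.1).1.edges_nodup
  have hQtailnd : Q.support.tail.Nodup := ((Walk.isCycle_def Q).mp hQ.1).2.2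
  clear hD hte ht1 ht2 hΓ hmem hinj hlinear huniform hQ
  cases Q with
  | nil => simp at hℓ; omega
  | @cons _ b₀ _ hadj q₀ =>
    rw [Walk.length_cons] at hℓ
    have hedges : (Walk.cons hadj q₀).edges = s(v, b₀) :: q₀.edges := Walk.edges_cons _ _
    have hndsup : (Walk.cons hadj q₀).support = v :: q₀.support := Walk.support_cons _ _
    have hq₀nd : q₀.support.Nodup := by rwa [hndsup] at hQtailnd
    have he₀ : s(v, b₀) ∈ (Walk.cons hadj q₀).edges := by
      rw [hedges]; exact List.mem_cons_self
    have hsub₀ : ∀ e ∈ q₀.edges, e ∈ (Walk.cons hadj q₀).edges := fun e he => by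
      rw [hedges]; exact List.mem_cons_of_mem _ he
    have he₀not : s(v, b₀) ∉ q₀.edges := by
      rw [hedges] at hQtrail
      exact (List.nodup_cons.mp hQtrail).1
    have hq₀b : b₀ ∉ q₀.support.tail := by
      have := hq₀nd
      rw [q₀.support_eq_cons] at this
      exact (List.nodup_cons.mp this).1
    obtain ⟨bl, m₂, hm₂le, hmsum⟩ : ∃ (bl : Bool) (m₂ : ℕ), m₂ ≤ q₀.length ∧
        (if bl then (4:ℕ) else 2) + (2 * q₀.length + 2 * m₂) = t := by
      rcases le_or_gt m q₀.length with hc | hc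
      · exact ⟨false, m, hc, by simp; omega⟩
      · exact ⟨true, m - 1, by omega, by simp; omega⟩
    obtain ⟨A₀, hA₀good, hA₀len⟩ := arcEx v b₀ he₀ bl
    obtain ⟨W₂, hlen₂, hcol₂, hnd₂, hednd₂, hinv₂, hinv₆₂⟩ :=
      aux_build G Γ h c κ (Walk.cons hadj q₀).edges coneq arcEx q₀ m₂ hm₂le hq₀nd hsub₀
    obtain ⟨hA₀path, hA₀sup, hA₀ind, hA₀col⟩ := hA₀good
    have hA₀good' : ArcGood Γ h c κ A₀ := ⟨hA₀path, hA₀sup, hA₀ind, hA₀col⟩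
    have hA₀nd : A₀.support.tail.Nodup := by
      have := (Walk.isPath_def A₀).mp hA₀path
      rw [A₀.support_eq_cons] at this
      exact (List.nodup_cons.mp this).2
    have hA₀start : v ∉ A₀.support.tail := by
      have := (Walk.isPath_def A₀).mp hA₀path
      rw [A₀.support_eq_cons] at this
      exact (List.nodup_cons.mp this).1
    refine ⟨v, A₀.append W₂, ?_, ?_, ?_, ?_⟩
    · -- IsCycle
      rw [Walk.isCycle_def]
      refine ⟨?_, ?_, ?_⟩
      · -- trail
        rw [Walk.isTrail_def, Walk.edges_append]
        refine List.nodup_append'.mpr ⟨hA₀path.edges_nodup, hednd₂, ?_⟩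
        intro p hpA hpW
        obtain ⟨f, hf, hpf⟩ := hinv₆₂ p hpW
        have hnef : s(v, b₀) ≠ f := fun hEq => he₀not (hEq ▸ hf)
        induction p using Sym2.ind with
        | _ α β =>
          have hαβ : Γ.Adj α β := (SimpleGraph.mem_edgeSet Γ).mp (A₀.edges_subset_edgeSet hpA)
          have hα := coneq _ he₀ _ (hsub₀ _ hf) hnef α
            (hA₀sup α (A₀.fst_mem_support_of_mem_edges hpA)) (hpf α (Sym2.mem_mk_left α β))
          have hβ := coneq _ he₀ _ (hsub₀ _ hf) hnef β
            (hA₀sup β (A₀.snd_mem_support_of_mem_edges hpA)) (hpf β (Sym2.mem_mk_right α β))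
          have h1 : s(v, b₀) = s(α, β) := (Sym2.mem_and_mem_iff hαβ.ne).mp ⟨hα.1, hβ.1⟩
          have h2 : f = s(α, β) := (Sym2.mem_and_mem_iff hαβ.ne).mp ⟨hα.2, hβ.2⟩
          exact hnef (h1.trans h2.symm)
      · -- ne nil
        intro hn
        have : (A₀.append W₂).length = 0 := by rw [hn]; rfl
        rw [Walk.length_append, hA₀len] at this
        cases bl <;> simp at this
      · -- support tail nodup
        rw [Walk.tail_support_append]
        refine List.nodup_append'.mpr ⟨hA₀nd, hnd₂, ?_⟩
        intro z hzA hzW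
        obtain ⟨x₂, y₂, A₂, he₂, hA₂good, hzA₂, hy₂, -, -⟩ := hinv₂ z hzW
        have hne₂ : s(v, b₀) ≠ s(x₂, y₂) := fun hEq => he₀not (hEq ▸ he₂)
        obtain ⟨hze, hze₂⟩ := coneq _ he₀ _ (hsub₀ _ he₂) hne₂ z
          (hA₀sup z (List.mem_of_mem_tail hzA))
          (hA₂good.2.1 z (List.mem_of_mem_tail hzA₂))
        rw [Sym2.mem_iff] at hze hze₂
        rcases hze with rfl | rfl
        · exact hA₀start hzA
        · rcases hze₂ with hEq | hEq
          · have hx₂start : x₂ ∉ A₂.support.tail := by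
              have := (Walk.isPath_def A₂).mp hA₂good.1
              rw [A₂.support_eq_cons] at this
              exact (List.nodup_cons.mp this).1
            exact hx₂start (hEq ▸ hzA₂)
          · exact hq₀b (hEq ▸ hy₂)
    · -- length
      rw [Walk.length_append, hA₀len, hlen₂]
      exact hmsum
    · -- colors
      intro p hp q hq
      have hpκ : ∀ r ∈ (A₀.append W₂).edges, c r = κ := by
        intro r hr
        rw [Walk.edges_append, List.mem_append] at hr
        rcases hr with hr | hr
        exacts [hA₀col r hr, hcol₂ r hr]
      rw [hpκ p hp, hpκ q hq]
    · -- induced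
      have hwit : ∀ z ∈ (A₀.append W₂).support, ∃ (x' y' : V) (A' : Γ.Walk x' y'),
          s(x', y') ∈ (Walk.cons hadj q₀).edges ∧ ArcGood Γ h c κ A' ∧ z ∈ A'.support ∧
          (∀ p ∈ A'.edges, p ∈ (A₀.append W₂).edges) ∧
          (∀ z' ∈ (A₀.append W₂).support, z' ∈ h s(x', y') → z' ∈ A'.support) := by
        intro z hz
        have hsatA₀ : ∀ z' ∈ (A₀.append W₂).support, z' ∈ h s(v, b₀) → z' ∈ A₀.support := by
          intro z' hz' hzh
          rw [Walk.mem_support_append_iff] at hz'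
          rcases hz' with hz'A | hz'W
          · exact hz'A
          · by_cases hzb : z' = b₀
            · subst hzb
              exact A₀.end_mem_support
            · have hz'Wt : z' ∈ W₂.support.tail := by
                rw [W₂.support_eq_cons] at hz'W
                rcases List.mem_cons.mp hz'W with hEq | hmem2
                · exact absurd hEq hzb
                · exact hmem2
              obtain ⟨x₃, y₃, A₃, he₃, hA₃good, hzA₃, -, -, -⟩ := hinv₂ z' hz'Wt
              have hne₃ : s(v, b₀) ≠ s(x₃, y₃) := fun hEq => he₀not (hEq ▸ he₃)
              have := (coneq _ he₀ _ (hsub₀ _ he₃) hne₃ z' hzh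
                (hA₃good.2.1 z' (List.mem_of_mem_tail hzA₃))).1
              rw [Sym2.mem_iff] at this
              rcases this with rfl | rfl
              · exact A₀.start_mem_support
              · exact A₀.end_mem_support
        rw [Walk.mem_support_append_iff] at hz
        rcases hz with hzA | hzW
        · exact ⟨v, b₀, A₀, he₀, hA₀good', hzA,
            fun p hp => by rw [Walk.edges_append, List.mem_append]; exact Or.inl hp, hsatA₀⟩
        · by_cases hzb : z = b₀
          · subst hzb
            exact ⟨v, z, A₀, he₀, hA₀good', A₀.end_mem_support,
              fun p hp => by rw [Walk.edges_append, List.mem_append]; exact Or.inl hp, hsatA₀⟩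
          · have hzWt : z ∈ W₂.support.tail := by
              rw [W₂.support_eq_cons] at hzW
              rcases List.mem_cons.mp hzW with hEq | hmem2
              · exact absurd hEq hzb
              · exact hmem2
            obtain ⟨x₂, y₂, A₂, he₂, hA₂good, hzA₂, hy₂, hedges₂, hsat₂⟩ := hinv₂ z hzWt
            refine ⟨x₂, y₂, A₂, hsub₀ _ he₂, hA₂good, List.mem_of_mem_tail hzA₂,
              fun p hp => by
                rw [Walk.edges_append, List.mem_append]; exact Or.inr (hedges₂ p hp), ?_⟩
            intro z' hz' hzh
            rw [Walk.mem_support_append_iff] at hz'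
            rcases hz' with hz'A | hz'W
            · have hne₂ : s(v, b₀) ≠ s(x₂, y₂) := fun hEq => he₀not (hEq ▸ he₂)
              have := (coneq _ he₀ _ (hsub₀ _ he₂) hne₂ z' (hA₀sup z' hz'A) hzh).2
              rw [Sym2.mem_iff] at this
              rcases this with rfl | rfl
              · exact A₂.start_mem_support
              · exact A₂.end_mem_support
            · exact hsat₂ z' hz'W hzh
      intro x hx y hy hadj2
      obtain ⟨x₁, y₁, A₁, he₁, hA₁good, hxA₁, hedges₁, hsat₁⟩ := hwit x hx
      obtain ⟨x₂, y₂, A₂, he₂, hA₂good, hyA₂, hedges₂, hsat₂⟩ := hwit y hy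
      have hxh : x ∈ h s(x₁, y₁) := hA₁good.2.1 x hxA₁
      have hyh : y ∈ h s(x₂, y₂) := hA₂good.2.1 y hyA₂
      rcases eq_or_ne (s(x₁, y₁) : Sym2 V) s(x₂, y₂) with hEq | hne12
      · have : y ∈ A₁.support := hsat₁ y hy (hEq ▸ hyh)
        exact hedges₁ _ (hA₁good.2.2.1 x hxA₁ y this hadj2)
      · rcases master _ he₁ _ he₂ hne12 x y hxh hyh hadj2 with ⟨-, hx2⟩ | ⟨hy1, -⟩
        · have hxA₂ : x ∈ A₂.support := by
            rw [Sym2.mem_iff] at hx2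
            rcases hx2 with rfl | rfl
            · exact A₂.start_mem_support
            · exact A₂.end_mem_support
          exact hedges₂ _ (hA₂good.2.2.1 x hxA₂ y hyA₂ hadj2)
        · have hyA₁ : y ∈ A₁.support := by
            rw [Sym2.mem_iff] at hy1
            rcases hy1 with rfl | rfl
            · exact A₁.start_mem_support
            · exact A₁.end_mem_support
          exact hedges₁ _ (hA₁good.2.2.1 x hxA₁ y hyA₁ hadj2)
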